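/- (Recursion for 𝒟) For every N ≥ 1 and every u ∈ ℂ: 𝒟^(N+1)(u) = c(u)² E⁺₊ ⊗ 𝒜^(N)(u) + a(u)c(u) E⁻₊ ⊗ ℬ^(N)(u) + a(u)c(u) E⁺₋ ⊗ 𝒞^(N)(u) + b(u)² E⁺₊ ⊗ 𝒟^(N)(u) + a(u)² E⁻₋ ⊗ 𝒟^(N)(u), where the first tensor factor acts on the new site N+1 and the size-N operators act on sites N,…,1. -/

import Mathlib

noncomputable section
open Complex Matrix

/-- Spin configurations of a chain of `N` sites: `true` encodes `v₊`, `false` encodes `v₋`.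
The site with label `i ∈ {1,…,N}` corresponds to the index `i-1 : Fin N`
(so the leftmost site `N` is the index `N-1`). -/
abbrev Conf (N : ℕ) := Fin N → Bool

/-- The combinatorial-point parameter `η = 2πi/3`. -/
def ηc : ℂ := 2 * (Real.pi : ℂ) * Complex.I / 3

/-- `a(u) = sinh(u+η)/sinh η`. -/
def aF (u : ℂ) : ℂ := Complex.sinh (u + ηc) / Complex.sinh ηc
/-- `b(u) = sinh(u)/sinh η`. -/
def bF (u : ℂ) : ℂ := Complex.sinh u / Complex.sinh ηc
/-- `c(u) = 1`. -/
def cF (_ : ℂ) : ℂ := 1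
/-- `d(u) = sinh(u-η)/sinh η`. -/
def dF (u : ℂ) : ℂ := Complex.sinh (u - ηc) / Complex.sinh ηc
/-- The R-matrix `R(u)` on `V⊗V` in the ordered basis `(v₊⊗v₊, v₊⊗v₋, v₋⊗v₊, v₋⊗v₋)`:
`[[a,0,0,0],[0,b,c,0],[0,c,b,0],[0,0,0,a]]`. -/
def Rm (u : ℂ) : Matrix (Bool × Bool) (Bool × Bool) ℂ :=
  Matrix.of fun o i =>
    if o = i then (if o.1 = o.2 then aF u else bF u)
    else if o.1 = i.2 ∧ o.2 = i.1 ∧ o.1 ≠ o.2 then cF u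
    else 0

/-- The boundary K-matrix `K⁻(u) = diag(d(u), -a(u))` in the basis `(v₊, v₋)`. -/
def Km (u : ℂ) : Matrix Bool Bool ℂ :=
  Matrix.of fun o i => if o = i then (if o then dF u else -aF u) else 0

/-- `R₀ᵢ(u)`: the matrix `R(u)` applied to `V₀ ⊗ Vᵢ` (auxiliary space first), identity
elsewhere, on `V₀ ⊗ V^⊗N`; here the site with label `i` is the index `i-1`. -/
def R0i (N : ℕ) (u : ℂ) (i : Fin N) :
    Matrix (Bool × Conf N) (Bool × Conf N) ℂ :=
  Matrix.of fun x y =>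
    if ∀ j, j ≠ i → x.2 j = y.2 j then Rm u (x.1, x.2 i) (y.1, y.2 i) else 0

/-- `Rᵢ₀(u)`: the matrix `R(u)` applied to `Vᵢ ⊗ V₀` (auxiliary space second), identity
elsewhere, on `V₀ ⊗ V^⊗N`. -/
def Ri0 (N : ℕ) (u : ℂ) (i : Fin N) :
    Matrix (Bool × Conf N) (Bool × Conf N) ℂ :=
  Matrix.of fun x y =>
    if ∀ j, j ≠ i → x.2 j = y.2 j then Rm u (x.2 i, x.1) (y.2 i, y.1) else 0

/-- `T^(N)(u) = R₀₁(u) R₀₂(u) ⋯ R₀N(u)`. -/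
def Tmono (N : ℕ) (u : ℂ) : Matrix (Bool × Conf N) (Bool × Conf N) ℂ :=
  (List.ofFn fun i : Fin N => R0i N u i).prod

/-- `T̄^(N)(u) = R_{N0}(u) ⋯ R_{20}(u) R_{10}(u)`. -/
def Tbar (N : ℕ) (u : ℂ) : Matrix (Bool × Conf N) (Bool × Conf N) ℂ :=
  (List.ofFn fun i : Fin N => Ri0 N u i).reverse.prod

/-- `K₀⁻(u)`: the matrix `K⁻(u)` acting on the auxiliary space `V₀`, identity on `V^⊗N`. -/
def K0m (N : ℕ) (u : ℂ) : Matrix (Bool × Conf N) (Bool × Conf N) ℂ :=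
  Matrix.of fun x y => if x.2 = y.2 then Km u x.1 y.1 else 0

/-- The double-row monodromy matrix `U^(N)(u) = T̄^(N)(u) K₀⁻(u) T^(N)(u)`. -/
def Umono (N : ℕ) (u : ℂ) : Matrix (Bool × Conf N) (Bool × Conf N) ℂ :=
  Tbar N u * K0m N u * Tmono N u

/-- `𝒜^(N)(u)`: the `(v₊, v₊)` auxiliary-space block of `U^(N)(u)`. -/
def Aop (N : ℕ) (u : ℂ) : Matrix (Conf N) (Conf N) ℂ :=
  Matrix.of fun s t => Umono N u (true, s) (true, t)
/-- `ℬ^(N)(u)`: the `(v₊, v₋)` auxiliary-space block of `U^(N)(u)`. -/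
def Bop (N : ℕ) (u : ℂ) : Matrix (Conf N) (Conf N) ℂ :=
  Matrix.of fun s t => Umono N u (true, s) (false, t)
/-- `𝒞^(N)(u)`: the `(v₋, v₊)` auxiliary-space block of `U^(N)(u)`. -/
def Cop (N : ℕ) (u : ℂ) : Matrix (Conf N) (Conf N) ℂ :=
  Matrix.of fun s t => Umono N u (false, s) (true, t)
/-- `𝒟^(N)(u)`: the `(v₋, v₋)` auxiliary-space block of `U^(N)(u)`. -/
def Dop (N : ℕ) (u : ℂ) : Matrix (Conf N) (Conf N) ℂ :=
  Matrix.of fun s t => Umono N u (false, s) (false, t)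

/-- The transfer matrix
`t^(N)(u) = (sinh u / sinh η) 𝒜^(N)(u) - (sinh(u+2η)/sinh η) 𝒟^(N)(u)`. -/
def tOp (N : ℕ) (u : ℂ) : Matrix (Conf N) (Conf N) ℂ :=
  (Complex.sinh u / Complex.sinh ηc) • Aop N u
    - (Complex.sinh (u + 2 * ηc) / Complex.sinh ηc) • Dop N u

/-- The pseudovacuum `Ω^(N) = v₊ ⊗ ⋯ ⊗ v₊`. -/
def Omega (N : ℕ) : Conf N → ℂ := fun s => if ∀ j, s j = true then 1 else 0

/-- `E^ε ⊗ X : V^⊗(n+2) → V^⊗(n+1)`: the linear functional `E^ε : V → ℂ`, `v_ε ↦ 1`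
(zero on the other basis vector), applied to the leftmost site `N = n+2`, tensored with
the operator `X` on the remaining sites `n+1,…,1`.  Here `e = true` encodes `ε = +`. -/
def Etens (n : ℕ) (e : Bool) (X : Matrix (Conf (n + 1)) (Conf (n + 1)) ℂ) :
    Matrix (Conf (n + 1)) (Conf (n + 2)) ℂ :=
  Matrix.of fun o i =>
    (if i (Fin.last (n + 1)) = e then 1 else 0) * X o (fun j => i (Fin.castSucc j))

/-- `F ⊗ X` : the one-site operator `F` applied to the leftmost site `N+1` of a chain of
`N+1` sites, tensored with the operator `X` on the remaining sites `N,…,1`. -/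
def siteTens (N : ℕ) (F : Matrix Bool Bool ℂ) (X : Matrix (Conf N) (Conf N) ℂ) :
    Matrix (Conf (N + 1)) (Conf (N + 1)) ℂ :=
  Matrix.of fun o i =>
    F (o (Fin.last N)) (i (Fin.last N)) * X (fun j => o (Fin.castSucc j)) (fun j => i (Fin.castSucc j))

/-- `E^ε_{ε'} : V → V` sends `v_ε ↦ v_{ε'}` and the other basis vector to `0`
(`true` encodes `+`). -/
def Eop (e e' : Bool) : Matrix Bool Bool ℂ :=
  Matrix.of fun o i => if i = e ∧ o = e' then 1 else 0
namespace DRec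

/-- Lift an operator on `V₀ ⊗ V^⊗N` to `V₀ ⊗ V^⊗(N+1)`, identity on the new last site. -/
def lift (N : ℕ) (M : Matrix (Bool × Conf N) (Bool × Conf N) ℂ) :
    Matrix (Bool × Conf (N + 1)) (Bool × Conf (N + 1)) ℂ :=
  Matrix.of fun x y =>
    if x.2 (Fin.last N) = y.2 (Fin.last N) then
      M (x.1, Fin.init x.2) (y.1, Fin.init y.2) else 0

lemma sum_reindex {N : ℕ} (g : Bool × Conf (N + 1) → ℂ) :
    ∑ x : Bool × Conf (N + 1), g x
      = ∑ c : Bool, ∑ γ : Bool, ∑ r : Conf N, g (c, Fin.snoc r γ) := by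
  rw [Fintype.sum_prod_type]
  refine Finset.sum_congr rfl fun c _ => ?_
  rw [← Equiv.sum_comp (Fin.snocEquiv fun _ => Bool) (fun s => g (c, s)),
    Fintype.sum_prod_type]
  rfl

lemma lift_one (N : ℕ) : lift N 1 = 1 := by
  ext ⟨b, s⟩ ⟨c, t⟩
  simp only [lift, Matrix.of_apply, Matrix.one_apply, Prod.mk.injEq, Prod.ext_iff]
  by_cases h : s (Fin.last N) = t (Fin.last N)
  · simp only [h, if_true]
    by_cases hb : b = c
    · subst hb
      by_cases hs : s = t
      · simp [hs]
      · have : Fin.init s ≠ Fin.init t ∨ True := Or.inr trivial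
        have h2 : ¬ (Fin.init s = Fin.init t) := by
          intro he
          apply hs
          funext j
          refine Fin.lastCases h (fun k => ?_) j
          exact congrFun he k
        simp [hs, h2]
    · simp [hb]
  · have : s ≠ t := fun he => h (by rw [he])
    simp [h, this]

lemma lift_mul (N : ℕ) (M P : Matrix (Bool × Conf N) (Bool × Conf N) ℂ) :
    lift N (M * P) = lift N M * lift N P := by
  ext ⟨b, s⟩ ⟨c, t⟩
  simp only [lift, Matrix.of_apply, Matrix.mul_apply]
  rw [sum_reindex (fun x => _)]
  simp only [Fin.snoc_last, Fin.init_snoc]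
  by_cases h : s (Fin.last N) = t (Fin.last N)
  · simp only [h, if_true]
    rw [Fintype.sum_prod_type]
    refine Finset.sum_congr rfl fun d _ => ?_
    rw [Fintype.sum_bool]
    rcases hst : t (Fin.last N) with _ | _ <;>
      simp [← h, hst]
  · simp only [h, if_false]
    rw [Finset.sum_eq_zero]
    intro d _
    rw [Finset.sum_eq_zero]
    intro γ _
    rw [Finset.sum_eq_zero]
    intro r _
    by_cases h1 : s (Fin.last N) = γ
    · have h2 : γ ≠ t (Fin.last N) := fun he => h (h1.trans he)
      simp [h2]
    · simp [h1]

end DRec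
namespace DRec

lemma offlast_iff {N : ℕ} (s t : Conf (N + 1)) (i : Fin N) :
    (∀ j, j ≠ Fin.castSucc i → s j = t j)
      ↔ (s (Fin.last N) = t (Fin.last N) ∧ ∀ k, k ≠ i → Fin.init s k = Fin.init t k) := by
  constructor
  · intro h
    refine ⟨h _ (Fin.castSucc_lt_last i).ne', fun k hk => h _ (by
      simp [Fin.castSucc_inj, hk])⟩
  · rintro ⟨h1, h2⟩ j
    revert j
    refine Fin.lastCases (fun _ => h1) (fun k hk => ?_)
    exact h2 k (fun he => hk (by rw [he]))

lemma R0i_lift {N : ℕ} (u : ℂ) (i : Fin N) :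
    R0i (N + 1) u (Fin.castSucc i) = lift N (R0i N u i) := by
  ext ⟨b, s⟩ ⟨c, t⟩
  simp only [R0i, lift, Matrix.of_apply, offlast_iff]
  by_cases h1 : s (Fin.last N) = t (Fin.last N) <;>
    by_cases h2 : ∀ k, k ≠ i → Fin.init s k = Fin.init t k <;>
      simp [h1, h2, Fin.init] <;> congr 1

lemma Ri0_lift {N : ℕ} (u : ℂ) (i : Fin N) :
    Ri0 (N + 1) u (Fin.castSucc i) = lift N (Ri0 N u i) := by
  ext ⟨b, s⟩ ⟨c, t⟩
  simp only [Ri0, lift, Matrix.of_apply, offlast_iff]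
  by_cases h1 : s (Fin.last N) = t (Fin.last N) <;>
    by_cases h2 : ∀ k, k ≠ i → Fin.init s k = Fin.init t k <;>
      simp [h1, h2, Fin.init] <;> congr 1

lemma K0m_lift {N : ℕ} (u : ℂ) : K0m (N + 1) u = lift N (K0m N u) := by
  ext ⟨b, s⟩ ⟨c, t⟩
  simp only [K0m, lift, Matrix.of_apply]
  by_cases h1 : s (Fin.last N) = t (Fin.last N)
  · simp only [h1, if_true]
    by_cases h2 : Fin.init s = Fin.init t
    · have : s = t := by
        funext j
        refine Fin.lastCases h1 (fun k => congrFun h2 k) j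
      simp [this, h2]
    · have : s ≠ t := fun he => h2 (by rw [he])
      simp [this, h2]
  · have : s ≠ t := fun he => h1 (by rw [he])
    simp [h1, this]

/-- `lift` as a monoid hom. -/
def liftHom (N : ℕ) :
    Matrix (Bool × Conf N) (Bool × Conf N) ℂ →* Matrix (Bool × Conf (N + 1)) (Bool × Conf (N + 1)) ℂ where
  toFun := lift N
  map_one' := lift_one N
  map_mul' := lift_mul N

lemma Tmono_succ (N : ℕ) (u : ℂ) :
    Tmono (N + 1) u = lift N (Tmono N u) * R0i (N + 1) u (Fin.last N) := by
  unfold Tmono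
  rw [List.ofFn_succ', List.concat_eq_append, List.prod_append, List.prod_cons,
    List.prod_nil, mul_one]
  congr 1
  have : (List.ofFn fun i : Fin N => R0i (N + 1) u (Fin.castSucc i))
      = List.map (liftHom N) (List.ofFn fun i : Fin N => R0i N u i) := by
    rw [List.map_ofFn]
    congr 1
    funext i
    exact R0i_lift u i
  rw [this, List.prod_hom]
  rfl

lemma Tbar_succ (N : ℕ) (u : ℂ) :
    Tbar (N + 1) u = Ri0 (N + 1) u (Fin.last N) * lift N (Tbar N u) := by
  unfold Tbar
  rw [List.ofFn_succ', List.concat_eq_append, List.reverse_append, List.reverse_cons,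
    List.reverse_nil, List.nil_append, List.singleton_append, List.prod_cons]
  congr 1
  have h2 : (List.ofFn fun i : Fin N => Ri0 (N + 1) u (Fin.castSucc i))
      = List.map (liftHom N) (List.ofFn fun i : Fin N => Ri0 N u i) := by
    rw [List.map_ofFn]
    congr 1
    funext i
    exact Ri0_lift u i
  rw [h2, ← List.map_reverse, List.prod_hom]
  rfl

lemma Umono_succ (N : ℕ) (u : ℂ) :
    Umono (N + 1) u
      = Ri0 (N + 1) u (Fin.last N) * lift N (Umono N u) * R0i (N + 1) u (Fin.last N) := by
  unfold Umono
  rw [Tbar_succ, K0m_lift, Tmono_succ, lift_mul, lift_mul]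
  simp only [mul_assoc]

end DRec
namespace DRec

lemma snoc_cond {N : ℕ} (o : Conf (N + 1)) (r : Conf N) (γ : Bool) :
    (∀ j, j ≠ Fin.last N → o j = (Fin.snoc r γ : Conf (N + 1)) j) ↔ r = Fin.init o := by
  constructor
  · intro h
    funext k
    have := h (Fin.castSucc k) (Fin.castSucc_lt_last k).ne
    simpa [Fin.init] using this.symm
  · rintro rfl j
    revert j
    refine Fin.lastCases (fun h => absurd rfl h) (fun k _ => ?_)
    simp [Fin.init]

lemma snoc_cond' {N : ℕ} (i : Conf (N + 1)) (s : Conf N) (δ : Bool) :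
    (∀ j, j ≠ Fin.last N → (Fin.snoc s δ : Conf (N + 1)) j = i j) ↔ s = Fin.init i := by
  rw [show (∀ j, j ≠ Fin.last N → (Fin.snoc s δ : Conf (N + 1)) j = i j)
      ↔ (∀ j, j ≠ Fin.last N → i j = (Fin.snoc s δ : Conf (N + 1)) j) from
    ⟨fun h j hj => (h j hj).symm, fun h j hj => (h j hj).symm⟩]
  exact snoc_cond i s δ

lemma Umono_succ_entry (N : ℕ) (u : ℂ) (b c : Bool) (o i : Conf (N + 1)) :
    Umono (N + 1) u (b, o) (c, i)
      = ∑ α : Bool, ∑ γ : Bool, ∑ β : Bool,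
          Rm u (o (Fin.last N), b) (γ, α)
            * Umono N u (α, Fin.init o) (β, Fin.init i)
            * Rm u (β, γ) (c, i (Fin.last N)) := by
  rw [Umono_succ]
  simp only [Matrix.mul_apply, Finset.sum_mul]
  simp_rw [sum_reindex (fun y => _)]
  simp only [Ri0, R0i, lift, Matrix.of_apply, Fin.snoc_last, Fin.init_snoc,
    snoc_cond, snoc_cond']
  simp only [ite_mul, mul_ite, zero_mul, mul_zero, Finset.sum_ite_irrel,
    Finset.sum_const_zero, Finset.sum_ite_eq, Finset.sum_ite_eq',
    Finset.mem_univ, if_true]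
  simp only [Fintype.sum_bool]
  ring

end DRec
/-- recursion for 𝒟: for every `N ≥ 1` and every `u ∈ ℂ`,
`𝒟^(N+1)(u) = c² E⁺₊ ⊗ 𝒜^(N) + ac E⁻₊ ⊗ ℬ^(N) + ac E⁺₋ ⊗ 𝒞^(N) + b² E⁺₊ ⊗ 𝒟^(N)
  + a² E⁻₋ ⊗ 𝒟^(N)`, the first factor acting on the new (leftmost) site `N+1`. -/
theorem D_recursion (N : ℕ) (hN : 1 ≤ N) (u : ℂ) :
    Dop (N + 1) u
      = cF u ^ 2 • siteTens N (Eop true true) (Aop N u)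
        + (aF u * cF u) • siteTens N (Eop false true) (Bop N u)
        + (aF u * cF u) • siteTens N (Eop true false) (Cop N u)
        + bF u ^ 2 • siteTens N (Eop true true) (Dop N u)
        + aF u ^ 2 • siteTens N (Eop false false) (Dop N u) := by
  ext o i
  have hL : Dop (N + 1) u o i = Umono (N + 1) u (false, o) (false, i) := rfl
  rw [hL, DRec.Umono_succ_entry]
  have ho : (fun j => o (Fin.castSucc j)) = Fin.init o := rfl
  have hi : (fun j => i (Fin.castSucc j)) = Fin.init i := rfl
  simp only [Matrix.add_apply, Matrix.smul_apply, siteTens, Eop, Aop, Bop, Cop, Dop,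
    Matrix.of_apply, smul_eq_mul, ho, hi]
  rcases h1 : o (Fin.last N) <;> rcases h2 : i (Fin.last N) <;>
    simp [Fintype.sum_bool, Rm, cF] <;> ring
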